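/- arXiv:0706.4308 — 5 statements merged into one kernel-verified Lean document; each statement's English description precedes it below -/
import Mathlib

section
/- Let V be a finite-dimensional vector space over ℚ, L ⊆ V a full lattice (the ℤ-span of a basis of V), and W a finite subgroup of GL(V) with w(L) = L for all w ∈ W. For each reflection s ∈ W (an element with s² = id whose fixed subspace has codimension 1), let α_s^∨ be a generator of the rank-one free ℤ-module L ∩ {v : s(v) = −v}, and let α_s ∈ V* be the unique functional with s(x) = x − α_s(x)·α_s^∨ for all x. Then: (i) for any two reflections s, s' ∈ W one has α_s(α_{s'}^∨) ∈ ℤ; and (ii) for any reflection s ∈ W and any w ∈ W, the element w·s·w⁻¹ is again a reflection in W and w(α_s^∨) = α_{w s w⁻¹}^∨ or w(α_s^∨) = −α_{w s w⁻¹}^∨. In particular, the set R^∨ = {±α_s^∨ : s a reflection in W} ⊆ V is stable under the action of W. -/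
/-- A reflection of a `ℚ`-vector space: an involutive linear automorphism whose fixed
subspace has codimension one. -/
def IsReflection {V : Type*} [AddCommGroup V] [Module ℚ V] (s : V ≃ₗ[ℚ] V) : Prop :=
  (∀ x, s (s x) = x) ∧
  Module.finrank ℚ V
    = Module.finrank ℚ
        (LinearMap.ker (s.toLinearMap - (LinearMap.id : V →ₗ[ℚ] V))) + 1

lemma mul_apply' {V : Type*} [AddCommGroup V] [Module ℚ V] (f g : V ≃ₗ[ℚ] V) (x : V) :
    (f * g) x = f (g x) := rfl

lemma inv_apply' {V : Type*} [AddCommGroup V] [Module ℚ V] (f : V ≃ₗ[ℚ] V) (x : V) :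
    (f⁻¹) x = f.symm x := rfl

lemma refl_conj {V : Type*} [AddCommGroup V] [Module ℚ V]
    (w s : V ≃ₗ[ℚ] V) (hs : IsReflection s) : IsReflection (w * s * w⁻¹) := by
  obtain ⟨h1, h2⟩ := hs
  constructor
  · intro x
    simp only [mul_apply', inv_apply', LinearEquiv.apply_symm_apply, h1,
      LinearEquiv.symm_apply_apply]
  · have hker : LinearMap.ker ((w * s * w⁻¹).toLinearMap - (LinearMap.id : V →ₗ[ℚ] V))
        = Submodule.map (w.toLinearMap) (LinearMap.ker (s.toLinearMap - (LinearMap.id : V →ₗ[ℚ] V))) := by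
      ext x
      simp only [LinearMap.mem_ker, LinearMap.sub_apply, LinearMap.id_apply, Submodule.mem_map,
        sub_eq_zero, LinearEquiv.coe_coe]
      constructor
      · intro hx
        refine ⟨w.symm x, ?_, w.apply_symm_apply x⟩
        have : w (s (w.symm x)) = x := hx
        have := congrArg w.symm this
        simpa using this
      · rintro ⟨y, hy, rfl⟩
        show w (s (w.symm (w y))) = w y
        rw [w.symm_apply_apply, hy]
    rw [hker, LinearEquiv.finrank_map_eq]
    exact h2

/-- Let `W` be a finite subgroup of `GL(V)` preserving a full lattice `L` in a
finite-dimensional `ℚ`-vector space `V`.  For each reflection `s ∈ W` let `αv s` be a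
generator of the rank-one free `ℤ`-module `L ∩ {v : s v = -v}` and `α s ∈ V*` the
functional with `s x = x - α s x • αv s`.  Then: (i) `α s (αv s') ∈ ℤ` for all
reflections `s, s' ∈ W`; (ii) for a reflection `s ∈ W` and `w ∈ W`, the element
`w s w⁻¹` is a reflection in `W` and `w (αv s) = ± αv (w s w⁻¹)`; in particular the set
`R^∨ = {± αv s}` is stable under `W`. -/
theorem stmt_3 {V : Type*} [AddCommGroup V] [Module ℚ V] [FiniteDimensional ℚ V]
    {ι : Type*} [Fintype ι] (b : Module.Basis ι ℚ V)
    (L : Submodule ℤ V) (hL : L = Submodule.span ℤ (Set.range b))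
    (W : Subgroup (V ≃ₗ[ℚ] V)) [Finite W]
    (hWL : ∀ w ∈ W, ⇑w '' (L : Set V) = (L : Set V))
    (αv : (V ≃ₗ[ℚ] V) → V) (α : (V ≃ₗ[ℚ] V) → Module.Dual ℚ V)
    (hgen : ∀ s ∈ W, IsReflection s → αv s ≠ 0 ∧
      {x : V | x ∈ L ∧ s x = -x} = {x : V | ∃ n : ℤ, x = n • αv s})
    (hα : ∀ s ∈ W, IsReflection s → ∀ x : V, s x = x - α s x • αv s) :
    (∀ s ∈ W, ∀ s' ∈ W, IsReflection s → IsReflection s' →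
        ∃ n : ℤ, α s (αv s') = (n : ℚ)) ∧
    (∀ s ∈ W, IsReflection s → ∀ w ∈ W,
        w * s * w⁻¹ ∈ W ∧ IsReflection (w * s * w⁻¹) ∧
        (w (αv s) = αv (w * s * w⁻¹) ∨ w (αv s) = -αv (w * s * w⁻¹))) ∧
    (∀ w ∈ W,
        ⇑w '' {v : V | ∃ s ∈ W, IsReflection s ∧ (v = αv s ∨ v = -αv s)}
          = {v : V | ∃ s ∈ W, IsReflection s ∧ (v = αv s ∨ v = -αv s)}) := by
  have hmemL : ∀ w ∈ W, ∀ x ∈ L, w x ∈ L := by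
    intro w hw x hx
    have h := hWL w hw
    have : w x ∈ ⇑w '' (L : Set V) := ⟨x, hx, rfl⟩
    rwa [h] at this
  have hαvL : ∀ s ∈ W, IsReflection s → αv s ∈ L ∧ s (αv s) = -αv s := by
    intro s hs hrs
    have h := (hgen s hs hrs).2
    have hmem : αv s ∈ {x : V | ∃ n : ℤ, x = n • αv s} := ⟨1, by simp⟩
    rw [← h] at hmem
    exact hmem
  have key : ∀ s ∈ W, IsReflection s → ∀ x : V, x ∈ L → s x = -x →
      ∃ n : ℤ, x = n • αv s := by
    intro s hs hrs x hxL hsx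
    have h := (hgen s hs hrs).2
    have hmem : x ∈ {x : V | x ∈ L ∧ s x = -x} := ⟨hxL, hsx⟩
    rw [h] at hmem
    exact hmem
  -- Part 2 (proved first, reused in part 3)
  have part2 : ∀ s ∈ W, IsReflection s → ∀ w ∈ W,
      w * s * w⁻¹ ∈ W ∧ IsReflection (w * s * w⁻¹) ∧
      (w (αv s) = αv (w * s * w⁻¹) ∨ w (αv s) = -αv (w * s * w⁻¹)) := by
    intro s hs hr w hw
    have htW : w * s * w⁻¹ ∈ W := mul_mem (mul_mem hw hs) (inv_mem hw)
    have hrt : IsReflection (w * s * w⁻¹) := refl_conj w s hr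
    refine ⟨htW, hrt, ?_⟩
    set t := w * s * w⁻¹ with ht
    have hconj : ∀ y : V, t (w y) = w (s y) := by
      intro y
      show w (s (w.symm (w y))) = w (s y)
      rw [w.symm_apply_apply]
    have h1 : t (w (αv s)) = -(w (αv s)) := by
      rw [hconj, (hαvL s hs hr).2, map_neg]
    obtain ⟨n, hn⟩ := key t htW hrt _ (hmemL w hw _ (hαvL s hs hr).1) h1
    have h2 : s (w.symm (αv t)) = -(w.symm (αv t)) := by
      apply w.injective
      rw [← hconj, w.apply_symm_apply, (hαvL t htW hrt).2, map_neg, w.apply_symm_apply]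
    have hL2 : w.symm (αv t) ∈ L := by
      have := hmemL w⁻¹ (inv_mem hw) _ (hαvL t htW hrt).1
      exact this
    obtain ⟨m, hm⟩ := key s hs hr _ hL2 h2
    have hmn : αv t = (m * n) • αv t := by
      have := congrArg w hm
      rw [w.apply_symm_apply, map_zsmul] at this
      rw [hn, smul_smul] at this
      exact this
    have h1mn : (1 - m * n) • αv t = 0 := by
      rw [sub_smul, one_smul, ← hmn, sub_self]
    have hne : αv t ≠ 0 := (hgen t htW hrt).1
    have hmn1 : m * n = 1 := by
      rcases smul_eq_zero.mp (show ((1 - m * n : ℤ) : ℚ) • αv t = 0 by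
          rw [Int.cast_smul_eq_zsmul]; exact h1mn) with h | h
      · have := Int.cast_eq_zero.mp h; omega
      · exact absurd h hne
    have : n = 1 ∨ n = -1 := Int.isUnit_iff.mp (IsUnit.of_mul_eq_one (a := n) m (by linarith [hmn1, mul_comm m n]))
    rcases this with rfl | rfl
    · left; simpa using hn
    · right; rw [hn]; simp
  refine ⟨?_, part2, ?_⟩
  · -- Part 1
    intro s hs s' hs' hr hr'
    set c := α s (αv s') with hc
    have h1 : s (αv s') = αv s' - c • αv s := hα s hs hr _
    have h2 : c • αv s ∈ L := by
      have heq : c • αv s = αv s' - s (αv s') := by rw [h1]; abel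
      rw [heq]
      exact sub_mem (hαvL s' hs' hr').1 (hmemL s hs _ (hαvL s' hs' hr').1)
    have h3 : s (c • αv s) = -(c • αv s) := by
      rw [map_smul, (hαvL s hs hr).2, smul_neg]
    obtain ⟨n, hn⟩ := key s hs hr _ h2 h3
    refine ⟨n, ?_⟩
    have hv : αv s ≠ 0 := (hgen s hs hr).1
    have heq : c • αv s = (n : ℚ) • αv s := by
      rw [hn, Int.cast_smul_eq_zsmul]
    exact smul_left_injective ℚ hv heq
  · -- Part 3
    have hsub : ∀ w ∈ W,
        ⇑w '' {v : V | ∃ s ∈ W, IsReflection s ∧ (v = αv s ∨ v = -αv s)}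
          ⊆ {v : V | ∃ s ∈ W, IsReflection s ∧ (v = αv s ∨ v = -αv s)} := by
      rintro w hw _ ⟨v, ⟨s, hsW, hr, hv⟩, rfl⟩
      obtain ⟨htW, hrt, hpm⟩ := part2 s hsW hr w hw
      refine ⟨w * s * w⁻¹, htW, hrt, ?_⟩
      rcases hv with rfl | rfl
      · exact hpm
      · rcases hpm with h | h
        · right; rw [map_neg, h]
        · left; rw [map_neg, h, neg_neg]
    intro w hw
    apply Set.Subset.antisymm (hsub w hw)
    intro v hv
    have hv' : (w⁻¹ : V ≃ₗ[ℚ] V) v ∈ {v : V | ∃ s ∈ W, IsReflection s ∧ (v = αv s ∨ v = -αv s)} :=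
      hsub w⁻¹ (inv_mem hw) ⟨v, hv, rfl⟩
    exact ⟨(w⁻¹ : V ≃ₗ[ℚ] V) v, hv', w.apply_symm_apply v⟩
end

section
/- Let V be a finite-dimensional real vector space, L ⊆ V a full lattice (the ℤ-span of a basis of V), and T = V ⧸ L the quotient topological abelian group. Let W' be a finite group of linear automorphisms of V with w(L) = L for all w ∈ W', acting on T by w • [v] = [w(v)]. Then the fixed-point set T^{W'} = {t ∈ T : w • t = t for all w ∈ W'} is a finite set if and only if the fixed subspace V^{W'} = {v ∈ V : w(v) = v for all w ∈ W'} is the zero subspace. -/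
private lemma repr_int_of_mem_span {V : Type*} [AddCommGroup V] [Module ℝ V]
    {ι : Type*} (b : Module.Basis ι ℝ V) {x : V}
    (hx : x ∈ Submodule.span ℤ (Set.range b)) (i : ι) :
    ∃ m : ℤ, b.repr x i = (m : ℝ) := by
  induction hx using Submodule.span_induction with
  | mem x hx =>
      obtain ⟨j, rfl⟩ := hx
      by_cases h : j = i
      · exact ⟨1, by simp [h]⟩
      · exact ⟨0, by simp [Finsupp.single_apply, h]⟩
  | zero => exact ⟨0, by simp⟩
  | add x y _ _ hx hy =>
      obtain ⟨m, hm⟩ := hx; obtain ⟨m', hm'⟩ := hy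
      exact ⟨m + m', by simp [hm, hm']⟩
  | smul k x _ hx =>
      obtain ⟨m, hm⟩ := hx
      refine ⟨k * m, ?_⟩
      rw [map_zsmul, Finsupp.smul_apply, hm, zsmul_eq_mul]
      push_cast
      ring

private lemma sum_int_smul_mem {V : Type*} [AddCommGroup V] [Module ℝ V]
    {ι : Type*} [Fintype ι] (b : Module.Basis ι ℝ V) (d : ι → ℤ) :
    (∑ i, ((d i : ℝ)) • b i) ∈ Submodule.span ℤ (Set.range b) := by
  refine Submodule.sum_mem _ fun i _ => ?_
  rw [Int.cast_smul_eq_zsmul]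
  exact Submodule.smul_mem _ (d i) (Submodule.subset_span ⟨i, rfl⟩)

/-- Let `V` be a finite-dimensional real vector space, `L` the `ℤ`-span of a basis of
`V`, `T = V ⧸ L` the quotient torus, and `W'` a finite group of linear automorphisms of
`V` preserving `L`, acting on `T` by `w • [v] = [w v]`.  Then the fixed-point set
`T^{W'}` is finite if and only if the fixed subspace `V^{W'}` is zero. -/
theorem stmt_4 {V : Type*} [AddCommGroup V] [Module ℝ V] [FiniteDimensional ℝ V]
    {ι : Type*} [Fintype ι] (b : Module.Basis ι ℝ V)
    (L : Submodule ℤ V) (hL : L = Submodule.span ℤ (Set.range b))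
    (W' : Subgroup (V ≃ₗ[ℝ] V)) [Finite W']
    (hW'L : ∀ w ∈ W', ⇑w '' (L : Set V) = (L : Set V)) :
    {t : V ⧸ L.toAddSubgroup | ∀ w ∈ W', ∀ v : V,
        (QuotientAddGroup.mk v : V ⧸ L.toAddSubgroup) = t →
        (QuotientAddGroup.mk (w v) : V ⧸ L.toAddSubgroup) = t}.Finite
      ↔ {v : V | ∀ w ∈ W', w v = v} = {0} := by
  have memL : ∀ (w : V ≃ₗ[ℝ] V), w ∈ W' → ∀ x ∈ L, w x ∈ L := by
    intro w hw x hx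
    have : w x ∈ ⇑w '' (L : Set V) := ⟨x, hx, rfl⟩
    rwa [hW'L w hw] at this
  constructor
  · -- finite fixed set implies trivial fixed subspace
    intro hF
    rw [Set.eq_singleton_iff_unique_mem]
    refine ⟨fun w _ => map_zero w, ?_⟩
    intro v₀ hv₀
    by_contra hne
    -- find a coordinate of v₀ which is nonzero
    have hrepr : b.repr v₀ ≠ 0 := fun h => hne (by
      have := congrArg b.repr.symm h
      simpa using this)
    obtain ⟨i, hi⟩ : ∃ i, b.repr v₀ i ≠ 0 := by
      by_contra h
      push_neg at h
      exact hrepr (Finsupp.ext h)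
    set a : ℝ := b.repr v₀ i with ha
    have hε : (0 : ℝ) < |a|⁻¹ := by positivity
    -- the map c ↦ [c • v₀] lands in the fixed set and is injective on (0, |a|⁻¹)
    set g : ℝ → V ⧸ L.toAddSubgroup := fun c => QuotientAddGroup.mk (c • v₀) with hg
    have hginF : ∀ c : ℝ, g c ∈ {t : V ⧸ L.toAddSubgroup | ∀ w ∈ W', ∀ v : V,
        (QuotientAddGroup.mk v : V ⧸ L.toAddSubgroup) = t →
        (QuotientAddGroup.mk (w v) : V ⧸ L.toAddSubgroup) = t} := by
      intro c w hw u hu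
      rw [hg] at hu ⊢
      rw [QuotientAddGroup.eq_iff_sub_mem] at hu ⊢
      have : w (u - c • v₀) ∈ L.toAddSubgroup := memL w hw _ hu
      rw [map_sub, map_smul, hv₀ w hw] at this
      exact this
    have hinj : Set.InjOn g (Set.Ioo 0 |a|⁻¹) := by
      intro r hr s hs hgrs
      rw [hg] at hgrs
      rw [QuotientAddGroup.eq_iff_sub_mem, ← sub_smul, Submodule.mem_toAddSubgroup,
        hL] at hgrs
      obtain ⟨m, hm⟩ := repr_int_of_mem_span b hgrs i
      rw [map_smul, Finsupp.smul_apply, smul_eq_mul, ← ha] at hm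
      have hm0 : m = 0 := by
        have h1 : |(m : ℝ)| < 1 := by
          rw [← hm, abs_mul]
          calc |r - s| * |a| < |a|⁻¹ * |a| := by
                have : |r - s| < |a|⁻¹ := abs_sub_lt_iff.mpr
                  ⟨by linarith [hr.1, hr.2, hs.1, hs.2], by linarith [hr.1, hr.2, hs.1, hs.2]⟩
                exact mul_lt_mul_of_pos_right this (abs_pos.mpr hi)
            _ = 1 := inv_mul_cancel₀ (abs_ne_zero.mpr hi)
        have h2 : |m| < 1 := by exact_mod_cast h1
        rw [abs_lt] at h2
        omega
      have : r - s = 0 := by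
        push_cast [hm0] at hm
        rcases mul_eq_zero.mp hm with h | h
        · exact h
        · exact absurd h hi
      linarith
    have : Set.Infinite (g '' Set.Ioo 0 |a|⁻¹) := (Set.Ioo_infinite hε).image hinj
    exact (this.mono (by rintro t ⟨c, _, rfl⟩; exact hginF c)) hF
  · -- trivial fixed subspace implies finite fixed set
    intro h0
    haveI : Fintype W' := Fintype.ofFinite _
    set n : ℕ := Fintype.card W' with hn
    have hnpos : 0 < n := Fintype.card_pos
    apply Set.Finite.subset (Set.finite_range
      (fun c : ι → Fin n =>
        (QuotientAddGroup.mk (∑ i, (((c i : ℕ) : ℝ) / n) • b i) : V ⧸ L.toAddSubgroup)))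
    intro t ht
    obtain ⟨v, rfl⟩ := QuotientAddGroup.mk_surjective t
    have hsub : ∀ w : W', ((w : V ≃ₗ[ℝ] V)) v - v ∈ L := by
      intro w
      have := ht w w.2 v rfl
      rwa [QuotientAddGroup.eq_iff_sub_mem, Submodule.mem_toAddSubgroup] at this
    -- averaging argument: n • v ∈ L
    have hfix : (∑ w : W', ((w : V ≃ₗ[ℝ] V)) v) ∈ {x : V | ∀ w ∈ W', w x = x} := by
      intro u hu
      rw [map_sum]
      calc ∑ w : W', u (((w : V ≃ₗ[ℝ] V)) v)
          = ∑ w : W', (((((⟨u, hu⟩ : W') * w) : W') : V ≃ₗ[ℝ] V)) v := rfl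
        _ = ∑ w : W', ((w : V ≃ₗ[ℝ] V)) v := Equiv.sum_comp (Equiv.mulLeft (⟨u, hu⟩ : W'))
            (fun w => ((w : V ≃ₗ[ℝ] V)) v)
    rw [h0] at hfix
    have hsum0 : (∑ w : W', ((w : V ≃ₗ[ℝ] V)) v) = 0 := hfix
    have hnv : n • v ∈ L := by
      have : (∑ w : W', ((w : V ≃ₗ[ℝ] V)) v)
          = n • v + ∑ w : W', (((w : V ≃ₗ[ℝ] V)) v - v) := by
        rw [Finset.sum_sub_distrib, Finset.sum_const, Finset.card_univ]
        abel
      rw [hsum0] at this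
      have h2 : n • v = -∑ w : W', (((w : V ≃ₗ[ℝ] V)) v - v) := by
        have := this.symm
        linear_combination (norm := abel) this
      rw [h2]
      exact Submodule.neg_mem _ (Submodule.sum_mem _ fun w _ => hsub w)
    rw [hL] at hnv
    choose m hm using fun i => repr_int_of_mem_span b hnv i
    have hv_repr : ∀ i, b.repr v i = (m i : ℝ) / n := by
      intro i
      have h1 : (n : ℝ) * b.repr v i = (m i : ℝ) := by
        have := hm i
        rw [map_nsmul, Finsupp.smul_apply, nsmul_eq_mul] at this
        exact_mod_cast this
      field_simp
      linarith
    -- the residues give the witness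
    have hmodlt : ∀ i, (m i % (n : ℤ)).toNat < n := by
      intro i
      have h1 : 0 ≤ m i % (n : ℤ) := Int.emod_nonneg _ (by exact_mod_cast hnpos.ne')
      have h2 : m i % (n : ℤ) < n := Int.emod_lt_of_pos _ (by exact_mod_cast hnpos)
      omega
    refine ⟨fun i => ⟨(m i % (n : ℤ)).toNat, hmodlt i⟩, ?_⟩
    rw [QuotientAddGroup.eq_iff_sub_mem, Submodule.mem_toAddSubgroup, hL]
    have hveq : v = ∑ i, ((m i : ℝ) / n) • b i := by
      conv_lhs => rw [← b.sum_repr v]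
      exact Finset.sum_congr rfl fun i _ => by rw [hv_repr i]
    have key : (∑ i, ((((m i % (n : ℤ)).toNat : ℕ) : ℝ) / n) • b i) - v
        = ∑ i, (((-(m i / (n : ℤ)) : ℤ) : ℝ)) • b i := by
      rw [hveq, ← Finset.sum_sub_distrib]
      refine Finset.sum_congr rfl fun i _ => ?_
      rw [← sub_smul]
      congr 1
      have h1 : 0 ≤ m i % (n : ℤ) := Int.emod_nonneg _ (by exact_mod_cast hnpos.ne')
      have h2 : (((m i % (n : ℤ)).toNat : ℤ) : ℝ) = ((m i % (n : ℤ) : ℤ) : ℝ) := by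
        rw [Int.toNat_of_nonneg h1]
      have h3 : (n : ℤ) * (m i / n) + m i % n = m i := Int.mul_ediv_add_emod _ _
      have h3' : ((n : ℤ) : ℝ) * ((m i / (n : ℤ) : ℤ) : ℝ) + ((m i % (n : ℤ) : ℤ) : ℝ)
          = ((m i : ℤ) : ℝ) := by exact_mod_cast congrArg (Int.cast : ℤ → ℝ) h3
      have hnne : (n : ℝ) ≠ 0 := by exact_mod_cast hnpos.ne'
      field_simp
      push_cast at h2 ⊢
      rw [h2]
      push_cast at h3'
      linarith
    rw [key]
    exact sum_int_smul_mem b _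
end

section
/- Let V be a finite-dimensional real vector space, L ⊆ V a full lattice (the ℤ-span of a basis of V), and T = V ⧸ L the quotient topological abelian group. Let W' be a finite group of linear automorphisms of V with w(L) = L for all w ∈ W', acting on T by w • [v] = [w(v)], and suppose the fixed subspace V^{W'} = {v ∈ V : w(v) = v for all w ∈ W'} is zero. Then every point t ∈ T fixed by all elements of W' lies in the image in T of the subgroup (1/|W'|)·L = {v ∈ V : |W'|·v ∈ L} of V. -/
/-- Let `V` be a finite-dimensional real vector space, `L` the `ℤ`-span of a basis of
`V`, `T = V ⧸ L` the quotient torus, and `W'` a finite group of linear automorphisms of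
`V` preserving `L`, acting on `T` by `w • [v] = [w v]`, with zero fixed subspace
`V^{W'} = 0`.  Then every `W'`-fixed point of `T` is the image of a vector `v ∈ V` with
`|W'| • v ∈ L`. -/
theorem stmt_5 {V : Type*} [AddCommGroup V] [Module ℝ V] [FiniteDimensional ℝ V]
    {ι : Type*} [Fintype ι] (b : Module.Basis ι ℝ V)
    (L : Submodule ℤ V) (hL : L = Submodule.span ℤ (Set.range b))
    (W' : Subgroup (V ≃ₗ[ℝ] V)) [Finite W']
    (hW'L : ∀ w ∈ W', ⇑w '' (L : Set V) = (L : Set V))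
    (hfix : {v : V | ∀ w ∈ W', w v = v} = {0}) :
    ∀ t : V ⧸ L.toAddSubgroup,
      (∀ w ∈ W', ∀ v : V,
        (QuotientAddGroup.mk v : V ⧸ L.toAddSubgroup) = t →
        (QuotientAddGroup.mk (w v) : V ⧸ L.toAddSubgroup) = t) →
      ∃ v : V, (Nat.card W') • v ∈ L ∧
        (QuotientAddGroup.mk v : V ⧸ L.toAddSubgroup) = t := by
  intro t ht
  have : Fintype W' := Fintype.ofFinite _
  obtain ⟨v, hv⟩ := QuotientAddGroup.mk_surjective t
  refine ⟨v, ?_, hv⟩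
  -- each w v - v lies in L
  have hmem : ∀ w ∈ W', (w : V ≃ₗ[ℝ] V) v - v ∈ L := by
    intro w hw
    have h1 : (QuotientAddGroup.mk (w v) : V ⧸ L.toAddSubgroup)
        = QuotientAddGroup.mk v := (ht w hw v hv).trans hv.symm
    have := (QuotientAddGroup.eq (a := w v) (b := v)).mp h1
    have h2 : v - w v ∈ L := by simpa [neg_add_eq_sub] using this
    simpa using L.neg_mem h2
  -- the averaged sum is fixed, hence zero
  set s : V := ∑ w : W', (w : V ≃ₗ[ℝ] V) v with hs
  have hsfix : ∀ u ∈ W', u s = s := by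
    intro u hu
    have : u s = ∑ w : W', (((⟨u, hu⟩ : W') * w : W') : V ≃ₗ[ℝ] V) v := by
      rw [hs, map_sum]
      rfl
    rw [this]
    exact Fintype.sum_equiv (Equiv.mulLeft (⟨u, hu⟩ : W')) _ _ (fun w => rfl)
  have hs0 : s = 0 := by
    have : s ∈ {v : V | ∀ w ∈ W', w v = v} := hsfix
    rw [hfix] at this
    exact this
  have hsum : ∑ w : W', ((w : V ≃ₗ[ℝ] V) v - v) ∈ L :=
    Submodule.sum_mem _ (fun w _ => hmem w w.2)
  have hcard : (Nat.card W') = Fintype.card W' := Nat.card_eq_fintype_card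
  have : s - (Fintype.card W') • v ∈ L := by
    simpa [hs, Finset.sum_sub_distrib] using hsum
  rw [hs0, zero_sub] at this
  rw [hcard]
  simpa using L.neg_mem this
end

section
/- Let V be a finite-dimensional real vector space, L ⊆ V a full lattice (the ℤ-span of a basis of V), and T = V ⧸ L the quotient topological abelian group. Let W' be a finite group of linear automorphisms of V with w(L) = L for all w ∈ W', acting on T by w • [v] = [w(v)]. Then a point t ∈ T with w • t = t for all w ∈ W' is an isolated point of the fixed-point set T^{W'} = {x ∈ T : w • x = x for all w ∈ W'} (in the subspace topology) if and only if the fixed subspace V^{W'} = {v ∈ V : w(v) = v for all w ∈ W'} is the zero subspace. -/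
/-- Let `V` be a finite-dimensional real (Hausdorff topological) vector space, `L` the
`ℤ`-span of a basis of `V`, `T = V ⧸ L` the quotient torus with the quotient topology,
and `W'` a finite group of linear automorphisms of `V` preserving `L`, acting on `T` by
`w • [v] = [w v]`.  A `W'`-fixed point `t ∈ T` is an isolated point of the fixed set
`T^{W'}` if and only if the fixed subspace `V^{W'}` is zero. -/
theorem stmt_6 {V : Type*} [AddCommGroup V] [Module ℝ V] [FiniteDimensional ℝ V]
    [TopologicalSpace V] [IsTopologicalAddGroup V] [ContinuousSMul ℝ V] [T2Space V]
    {ι : Type*} [Fintype ι] (b : Module.Basis ι ℝ V)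
    (L : Submodule ℤ V) (hL : L = Submodule.span ℤ (Set.range b))
    (W' : Subgroup (V ≃ₗ[ℝ] V)) [Finite W']
    (hW'L : ∀ w ∈ W', ⇑w '' (L : Set V) = (L : Set V))
    (t : V ⧸ L.toAddSubgroup)
    (ht : ∀ w ∈ W', ∀ v : V,
        (QuotientAddGroup.mk v : V ⧸ L.toAddSubgroup) = t →
        (QuotientAddGroup.mk (w v) : V ⧸ L.toAddSubgroup) = t) :
    (∃ U : Set (V ⧸ L.toAddSubgroup), IsOpen U ∧
        U ∩ {x : V ⧸ L.toAddSubgroup | ∀ w ∈ W', ∀ v : V,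
            (QuotientAddGroup.mk v : V ⧸ L.toAddSubgroup) = x →
            (QuotientAddGroup.mk (w v) : V ⧸ L.toAddSubgroup) = x} = {t})
      ↔ {v : V | ∀ w ∈ W', w v = v} = {0} := by
  classical
  -- L is a discrete subset of V: 0 has a neighborhood meeting L only in 0.
  have hdisc : ∃ UL : Set V, IsOpen UL ∧ (0 : V) ∈ UL ∧
      ∀ x ∈ UL, x ∈ L → x = 0 := by
    have hpi : DiscreteTopology (Submodule.span ℤ (Set.range (Pi.basisFun ℝ ι))) :=
      ZSpan.discreteTopology_pi_basisFun
    rw [discreteTopology_iff_isOpen_singleton_zero, isOpen_induced_iff] at hpi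
    obtain ⟨S, hSopen, hSpre⟩ := hpi
    refine ⟨⇑b.equivFun ⁻¹' S, hSopen.preimage (continuous_equivFun_basis b), ?_, ?_⟩
    · have h0 : (⟨0, Submodule.zero_mem _⟩ :
          Submodule.span ℤ (Set.range (Pi.basisFun ℝ ι))) ∈ Subtype.val ⁻¹' S := by
        rw [hSpre]; rfl
      have h0' : (0 : ι → ℝ) ∈ S := h0
      simpa [Set.mem_preimage, map_zero] using h0'
    · intro x hx hxL
      rw [hL] at hxL
      have hmem : b.equivFun x ∈ Submodule.span ℤ (Set.range (Pi.basisFun ℝ ι)) := by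
        rw [Module.Basis.mem_span_iff_repr_mem] at hxL ⊢
        intro i
        simpa [Module.Basis.equivFun_apply] using hxL i
      have hx' : (⟨b.equivFun x, hmem⟩ :
          Submodule.span ℤ (Set.range (Pi.basisFun ℝ ι))) ∈ Subtype.val ⁻¹' S := hx
      rw [hSpre] at hx'
      have hval : b.equivFun x = 0 := congrArg Subtype.val hx'
      have := b.equivFun.injective (by simpa using hval : b.equivFun x = b.equivFun 0)
      simpa using this
  obtain ⟨UL, hULopen, hUL0, hULL⟩ := hdisc
  -- A representative of t
  obtain ⟨v, hv⟩ := QuotientAddGroup.mk_surjective t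
  -- for each w ∈ W', w v - v ∈ L
  have hvN : ∀ w ∈ W', w v - v ∈ L := by
    intro w hw
    have h1 : (QuotientAddGroup.mk (w v) : V ⧸ L.toAddSubgroup) = QuotientAddGroup.mk v := by
      rw [ht w hw v hv, hv]
    exact (QuotientAddGroup.eq_iff_sub_mem.mp h1 : w v - v ∈ L.toAddSubgroup)
  -- L is stable under W'
  have hstab : ∀ w ∈ W', ∀ l ∈ L, w l ∈ L := by
    intro w hw l hl
    have : w l ∈ (L : Set V) := by
      rw [← hW'L w hw]; exact ⟨l, hl, rfl⟩
    exact this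
  -- continuity of elements of W'
  have hcontw : ∀ w : V ≃ₗ[ℝ] V, Continuous ⇑w := fun w =>
    LinearMap.continuous_of_finiteDimensional (w.toLinearMap)
  constructor
  · -- isolated ⟹ fixed subspace is zero
    rintro ⟨U, hUopen, hUt⟩
    have htmem : t ∈ U ∩ {x : V ⧸ L.toAddSubgroup | ∀ w ∈ W', ∀ v : V,
        (QuotientAddGroup.mk v : V ⧸ L.toAddSubgroup) = x →
        (QuotientAddGroup.mk (w v) : V ⧸ L.toAddSubgroup) = x} := by
      rw [hUt]; rfl
    rw [Set.eq_singleton_iff_unique_mem]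
    refine ⟨by simp, ?_⟩
    intro v₀ hv₀
    have hv₀' : ∀ w ∈ W', w v₀ = v₀ := hv₀
    by_contra hne
    -- the path s ↦ [v + s • v₀]
    set f : ℝ → V ⧸ L.toAddSubgroup := fun s => QuotientAddGroup.mk (v + s • v₀) with hf
    have hfc : Continuous f :=
      QuotientAddGroup.continuous_mk.comp
        (continuous_const.add (continuous_id.smul continuous_const))
    have hW₁ : IsOpen (f ⁻¹' U ∩ (fun s : ℝ => s • v₀) ⁻¹' UL) :=
      (hfc.isOpen_preimage U hUopen).inter
        (hULopen.preimage (continuous_id.smul continuous_const))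
    have h0W₁ : (0 : ℝ) ∈ f ⁻¹' U ∩ (fun s : ℝ => s • v₀) ⁻¹' UL := by
      constructor
      · show f 0 ∈ U
        have : f 0 = t := by rw [hf]; simpa using hv
        rw [this]; exact htmem.1
      · show (0 : ℝ) • v₀ ∈ UL
        simpa using hUL0
    obtain ⟨ε, hε, hball⟩ := Metric.isOpen_iff.mp hW₁ 0 h0W₁
    set s : ℝ := ε / 2 with hs
    have hsne : s ≠ 0 := by positivity
    have hsball : s ∈ Metric.ball (0 : ℝ) ε := by
      rw [Metric.mem_ball, Real.dist_eq, sub_zero, abs_of_pos (by positivity)]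
      linarith
    have hsW₁ := hball hsball
    -- f s is in the fixed set
    have hfsfix : f s ∈ {x : V ⧸ L.toAddSubgroup | ∀ w ∈ W', ∀ v : V,
        (QuotientAddGroup.mk v : V ⧸ L.toAddSubgroup) = x →
        (QuotientAddGroup.mk (w v) : V ⧸ L.toAddSubgroup) = x} := by
      intro w hw v' hv'
      have hd : v' - (v + s • v₀) ∈ L :=
        (QuotientAddGroup.eq_iff_sub_mem.mp hv' : _ ∈ L.toAddSubgroup)
      have key : w v' - v' ∈ L := by
        have hcalc : w v' - v' =
            (w (v' - (v + s • v₀)) - (v' - (v + s • v₀))) + (w v - v) := by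
          have h1 : w (v' - (v + s • v₀)) = w v' - (w v + s • v₀) := by
            rw [map_sub, map_add, map_smul, hv₀' w hw]
          rw [h1]; abel
        rw [hcalc]
        exact add_mem (sub_mem (hstab w hw _ hd) hd) (hvN w hw)
      have : (QuotientAddGroup.mk (w v') : V ⧸ L.toAddSubgroup) = QuotientAddGroup.mk v' :=
        QuotientAddGroup.eq_iff_sub_mem.mpr (key : _ ∈ L.toAddSubgroup)
      rw [this, hv']
    have hfst : f s = t := by
      have : f s ∈ ({t} : Set (V ⧸ L.toAddSubgroup)) := by
        rw [← hUt]; exact ⟨hsW₁.1, hfsfix⟩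
      exact this
    -- hence s • v₀ ∈ L, but also s • v₀ ∈ UL, so s • v₀ = 0
    have hsv₀L : s • v₀ ∈ L := by
      have h1 : (QuotientAddGroup.mk (v + s • v₀) : V ⧸ L.toAddSubgroup) =
          QuotientAddGroup.mk v := by
        show f s = QuotientAddGroup.mk v
        rw [hfst, hv]
      have := (QuotientAddGroup.eq_iff_sub_mem.mp h1 : (v + s • v₀) - v ∈ L.toAddSubgroup)
      simpa using this
    have hsv₀0 : s • v₀ = 0 := hULL _ hsW₁.2 hsv₀L
    rcases smul_eq_zero.mp hsv₀0 with h | h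
    · exact hsne h
    · exact hne h
  · -- fixed subspace zero ⟹ isolated
    intro hfix
    -- the open neighborhood in V
    set UV : Set V := ⋂ w : W', (fun x => w.1 x - x - (w.1 v - v)) ⁻¹' UL with hUV
    have hUVopen : IsOpen UV := by
      refine isOpen_iInter_of_finite fun w => ?_
      exact hULopen.preimage (((hcontw w.1).sub continuous_id).sub continuous_const)
    have hvUV : v ∈ UV := by
      refine Set.mem_iInter.mpr fun w => ?_
      show w.1 v - v - (w.1 v - v) ∈ UL
      simpa using hUL0
    refine ⟨QuotientAddGroup.mk '' UV, QuotientAddGroup.isOpenMap_coe UV hUVopen, ?_⟩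
    apply Set.Subset.antisymm
    · rintro x ⟨⟨u, huUV, rfl⟩, hxfix⟩
      -- u is a fixed point mod L
      have huN : ∀ w ∈ W', w u - u ∈ L := by
        intro w hw
        have h1 : (QuotientAddGroup.mk (w u) : V ⧸ L.toAddSubgroup) = QuotientAddGroup.mk u :=
          hxfix w hw u rfl
        exact (QuotientAddGroup.eq_iff_sub_mem.mp h1 : _ ∈ L.toAddSubgroup)
      have hfixed : u - v ∈ {x : V | ∀ w ∈ W', w x = x} := by
        intro w hw
        have hmemUL : (w u - u) - (w v - v) ∈ UL := by
          have := Set.mem_iInter.mp huUV ⟨w, hw⟩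
          simpa using this
        have hmemL : (w u - u) - (w v - v) ∈ L := sub_mem (huN w hw) (hvN w hw)
        have h0 : (w u - u) - (w v - v) = 0 := hULL _ hmemUL hmemL
        have h1 : w u - u = w v - v := sub_eq_zero.mp h0
        rw [map_sub]
        exact sub_eq_sub_iff_sub_eq_sub.mpr h1
      rw [hfix] at hfixed
      have huv : u = v := sub_eq_zero.mp hfixed
      rw [Set.mem_singleton_iff, ← hv, huv]
    · intro x hx
      rw [Set.mem_singleton_iff] at hx
      subst hx
      exact ⟨⟨v, hvUV, hv⟩, fun w hw => ht w hw⟩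
end

section
/- Let V be a finite-dimensional real vector space, L ⊆ V a full lattice (the ℤ-span of a basis of V), and T = V ⧸ L the quotient topological abelian group. Let W be a finite group of linear automorphisms of V with w(L) = L for all w ∈ W, acting on T by w • [v] = [w(v)]. For t ∈ T let W_t = {w ∈ W : w • t = t} denote its stabilizer. Then the set Σ = { t ∈ T : t is an isolated point of the fixed set {x ∈ T : w • x = x for all w ∈ W_t} } is finite. -/
/-- Let `V` be a finite-dimensional real (Hausdorff topological) vector space, `L` the
`ℤ`-span of a basis of `V`, `T = V ⧸ L` the quotient torus with the quotient topology,
and `W` a finite group of linear automorphisms of `V` preserving `L`, acting on `T` by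
`w • [v] = [w v]`.  Then the set `Σ` of points `t ∈ T` that are isolated in the fixed
set of their own stabilizer `W_t` is finite. -/
theorem stmt_7 {V : Type*} [AddCommGroup V] [Module ℝ V] [FiniteDimensional ℝ V]
    [TopologicalSpace V] [IsTopologicalAddGroup V] [ContinuousSMul ℝ V] [T2Space V]
    {ι : Type*} [Fintype ι] (b : Module.Basis ι ℝ V)
    (L : Submodule ℤ V) (hL : L = Submodule.span ℤ (Set.range b))
    (W : Subgroup (V ≃ₗ[ℝ] V)) [Finite W]
    (hWL : ∀ w ∈ W, ⇑w '' (L : Set V) = (L : Set V)) :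
    {t : V ⧸ L.toAddSubgroup | ∃ U : Set (V ⧸ L.toAddSubgroup), IsOpen U ∧
        U ∩ {x : V ⧸ L.toAddSubgroup | ∀ w ∈ W,
            (∀ v : V, (QuotientAddGroup.mk v : V ⧸ L.toAddSubgroup) = t →
              (QuotientAddGroup.mk (w v) : V ⧸ L.toAddSubgroup) = t) →
            (∀ v : V, (QuotientAddGroup.mk v : V ⧸ L.toAddSubgroup) = x →
              (QuotientAddGroup.mk (w v) : V ⧸ L.toAddSubgroup) = x)} = {t}}.Finite := by
  classical
  set T := V ⧸ L.toAddSubgroup with hT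
  -- continuity of linear maps
  have hcont : ∀ (f : V →ₗ[ℝ] V), Continuous f := fun f =>
    f.continuous_of_finiteDimensional
  -- L is closed in V
  have hrepr_cont : ∀ i : ι, Continuous fun v : V => b.repr v i := by
    intro i
    exact (continuous_apply i).comp b.equivFun.toLinearMap.continuous_of_finiteDimensional
  have hLclosed : IsClosed (L : Set V) := by
    have h1 : (L : Set V) = ⋂ i, (fun v : V => b.repr v i) ⁻¹' (Set.range ((↑) : ℤ → ℝ)) := by
      ext v
      simp only [Set.mem_iInter, Set.mem_preimage, SetLike.mem_coe, hL]
      exact b.mem_span_iff_repr_mem ℤ v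
    rw [h1]
    exact isClosed_iInter fun i =>
      Int.isClosedEmbedding_coe_real.isClosed_range.preimage (hrepr_cont i)
  have hLclosed' : IsClosed (L.toAddSubgroup : Set V) := hLclosed
  haveI : IsClosed (L.toAddSubgroup : Set V) := hLclosed'
  haveI : T2Space T := inferInstance
  -- T is compact
  haveI : CompactSpace T := by
    refine ⟨?_⟩
    have hK : IsCompact (⇑(b.equivFun.symm) '' (Set.pi Set.univ fun _ : ι => Set.Icc (0:ℝ) 1)) :=
      (isCompact_univ_pi fun _ => isCompact_Icc).image
        b.equivFun.symm.toLinearMap.continuous_of_finiteDimensional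
    have hsurj : (Set.univ : Set T) = QuotientAddGroup.mk ''
        (⇑(b.equivFun.symm) '' (Set.pi Set.univ fun _ : ι => Set.Icc (0:ℝ) 1)) := by
      refine Set.eq_of_subset_of_subset ?_ (Set.subset_univ _)
      rintro x -
      obtain ⟨v, rfl⟩ := QuotientAddGroup.mk_surjective x
      set c := b.equivFun v with hc
      refine ⟨b.equivFun.symm (fun i => Int.fract (c i)), ⟨_, fun i _ => ?_, rfl⟩, ?_⟩
      · exact ⟨Int.fract_nonneg _, (Int.fract_lt_one _).le⟩
      · rw [QuotientAddGroup.eq]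
        have hvv : (-b.equivFun.symm fun i => Int.fract (c i)) + v =
            ∑ i, (⌊c i⌋ : ℤ) • b i := by
          have hv : v = b.equivFun.symm c := (b.equivFun.symm_apply_apply v).symm
          conv_lhs => rw [hv, ← map_neg, ← map_add, Module.Basis.equivFun_symm_apply]
          refine Finset.sum_congr rfl fun i _ => ?_
          have h2 : ((-fun i => Int.fract (c i)) + c) i = ((⌊c i⌋ : ℤ) : ℝ) := by
            rw [Pi.add_apply, Pi.neg_apply, Int.fract]
            ring
          rw [h2, Int.cast_smul_eq_zsmul]
        show (-b.equivFun.symm fun i => Int.fract (c i)) + v ∈ L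
        rw [hvv, hL]
        exact Submodule.sum_mem _ fun i _ =>
          Submodule.smul_mem _ _ (Submodule.subset_span ⟨i, rfl⟩)
    rw [hsurj]
    exact hK.image continuous_quot_mk
  -- quotient endomorphisms induced by elements of W
  have hmapL : ∀ w : ↥W, L.toAddSubgroup ≤
      AddSubgroup.comap ((w : V ≃ₗ[ℝ] V).toLinearMap.toAddMonoidHom) L.toAddSubgroup := by
    intro w v hv
    have h1 : (w : V ≃ₗ[ℝ] V) v ∈ ⇑(w : V ≃ₗ[ℝ] V) '' (L : Set V) := ⟨v, hv, rfl⟩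
    rw [hWL w w.2] at h1
    exact h1
  let g : ↥W → (T →+ T) := fun w =>
    QuotientAddGroup.map _ _ ((w : V ≃ₗ[ℝ] V).toLinearMap.toAddMonoidHom) (hmapL w)
  have hg_mk : ∀ (w : ↥W) (v : V), g w (QuotientAddGroup.mk v) =
      QuotientAddGroup.mk ((w : V ≃ₗ[ℝ] V) v) := fun w v =>
    QuotientAddGroup.map_mk _ _ _ _ v
  have hg_cont : ∀ w : ↥W, Continuous (g w) := by
    intro w
    rw [(QuotientAddGroup.isQuotientMap_mk L.toAddSubgroup).continuous_iff]
    have h2 : ⇑(g w) ∘ (QuotientAddGroup.mk) =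
        (QuotientAddGroup.mk : V → T) ∘ ⇑(w : V ≃ₗ[ℝ] V) := by
      funext v; exact hg_mk w v
    rw [h2]
    exact continuous_quot_mk.comp (hcont _)
  have hP : ∀ (w : ↥W) (x : T),
      (∀ v : V, (QuotientAddGroup.mk v : T) = x →
        (QuotientAddGroup.mk ((w : V ≃ₗ[ℝ] V) v) : T) = x) ↔ g w x = x := by
    intro w x
    constructor
    · intro h
      obtain ⟨v, rfl⟩ := QuotientAddGroup.mk_surjective x
      rw [hg_mk]; exact h v rfl
    · intro h v hv
      rw [← hg_mk w v, hv, h]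
  -- rewrite the fixed set of the stabilizer of t
  have hFixStmt : ∀ t : T,
      {x : T | ∀ w ∈ W,
          (∀ v : V, (QuotientAddGroup.mk v : T) = t → (QuotientAddGroup.mk (w v) : T) = t) →
          (∀ v : V, (QuotientAddGroup.mk v : T) = x → (QuotientAddGroup.mk (w v) : T) = x)}
        = {x : T | ∀ w : ↥W, g w t = t → g w x = x} := by
    intro t
    ext x
    simp only [Set.mem_setOf_eq]
    constructor
    · intro h w hwt
      exact (hP w x).mp (h w w.2 ((hP w t).mpr hwt))
    · intro h w hw hwt
      exact (hP ⟨w, hw⟩ x).mpr (h ⟨w, hw⟩ ((hP ⟨w, hw⟩ t).mp hwt))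
  suffices hS : {t : T | ∃ U : Set T, IsOpen U ∧
      U ∩ {x : T | ∀ w : ↥W, g w t = t → g w x = x} = {t}}.Finite by
    refine hS.subset ?_
    rintro t ⟨U, hU, hUeq⟩
    exact ⟨U, hU, by rw [← hFixStmt t]; exact hUeq⟩
  -- decompose according to the stabilizer
  have main : ∀ A : Set ↥W,
      {t : T | (∃ U : Set T, IsOpen U ∧
          U ∩ {x : T | ∀ w : ↥W, g w t = t → g w x = x} = {t}) ∧
        (∀ w : ↥W, g w t = t ↔ w ∈ A)}.Finite := by
    intro A
    by_cases hne : {t : T | (∃ U : Set T, IsOpen U ∧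
          U ∩ {x : T | ∀ w : ↥W, g w t = t → g w x = x} = {t}) ∧
        (∀ w : ↥W, g w t = t ↔ w ∈ A)}.Nonempty
    · obtain ⟨t0, ⟨U0, hU0open, hU0⟩, ht0A⟩ := hne
      set FA := {x : T | ∀ w : ↥W, w ∈ A → g w x = x} with hFAdef
      have hFAeq : {x : T | ∀ w : ↥W, g w t0 = t0 → g w x = x} = FA := by
        ext x
        simp only [Set.mem_setOf_eq, hFAdef]
        exact ⟨fun h w hwA => h w ((ht0A w).mpr hwA), fun h w hwt => h w ((ht0A w).mp hwt)⟩
      rw [hFAeq] at hU0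
      have ht0FA : t0 ∈ FA := by
        have : t0 ∈ U0 ∩ FA := hU0 ▸ rfl
        exact this.2
      have hFAclosed : IsClosed FA := by
        have : FA = ⋂ (w : ↥W), ⋂ (_ : w ∈ A), {x : T | g w x = x} := by
          ext x; simp only [Set.mem_iInter, Set.mem_setOf_eq, hFAdef]
        rw [this]
        exact isClosed_iInter fun w => isClosed_iInter fun _ =>
          isClosed_eq (hg_cont w) continuous_id
      have hFAadd : ∀ x ∈ FA, ∀ y ∈ FA, ∀ z ∈ FA, x + (y - z) ∈ FA := by
        intro x hx y hy z hz w hwA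
        rw [map_add, map_sub, hx w hwA, hy w hwA, hz w hwA]
      have hiso : ∀ s ∈ FA, ∃ Us : Set T, IsOpen Us ∧ Us ∩ FA = {s} := by
        intro s hs
        refine ⟨(fun x : T => x + (t0 - s)) ⁻¹' U0, hU0open.preimage (continuous_add_right (t0 - s)), ?_⟩
        ext x
        simp only [Set.mem_inter_iff, Set.mem_preimage, Set.mem_singleton_iff]
        constructor
        · rintro ⟨hxU, hxFA⟩
          have h3 : x + (t0 - s) ∈ U0 ∩ FA := ⟨hxU, hFAadd x hxFA t0 ht0FA s hs⟩
          rw [hU0, Set.mem_singleton_iff] at h3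
          have := congrArg (fun y => y - (t0 - s)) h3
          simpa using this
        · intro hx
          rw [hx]
          refine ⟨?_, hs⟩
          have : s + (t0 - s) = t0 := by abel
          rw [this]
          have : t0 ∈ U0 ∩ FA := hU0 ▸ rfl
          exact this.1
      have hdisc : ∀ a : ↥FA, IsOpen ({a} : Set ↥FA) := by
        intro a
        obtain ⟨Us, hUso, hUs⟩ := hiso a a.2
        have h4 : ({a} : Set ↥FA) = Subtype.val ⁻¹' Us := by
          ext x
          simp only [Set.mem_singleton_iff, Set.mem_preimage]
          constructor
          · intro hx
            rw [hx]
            have : (a : T) ∈ Us ∩ FA := hUs ▸ rfl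
            exact this.1
          · intro hx
            have h5 : (x : T) ∈ Us ∩ FA := ⟨hx, x.2⟩
            rw [hUs, Set.mem_singleton_iff] at h5
            exact Subtype.ext h5
        rw [h4]
        exact hUso.preimage continuous_subtype_val
      haveI := discreteTopology_iff_isOpen_singleton.mpr hdisc
      have hfin : FA.Finite := hFAclosed.isCompact.finite ⟨by infer_instance⟩
      refine hfin.subset ?_
      rintro t ⟨-, htA⟩ w hwA
      exact (htA w).mpr hwA
    · rw [Set.not_nonempty_iff_eq_empty] at hne
      rw [hne]
      exact Set.finite_empty
  have hsub : {t : T | ∃ U : Set T, IsOpen U ∧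
        U ∩ {x : T | ∀ w : ↥W, g w t = t → g w x = x} = {t}} ⊆
      ⋃ A : Set ↥W, {t : T | (∃ U : Set T, IsOpen U ∧
          U ∩ {x : T | ∀ w : ↥W, g w t = t → g w x = x} = {t}) ∧
        (∀ w : ↥W, g w t = t ↔ w ∈ A)} := by
    intro t ht
    exact Set.mem_iUnion.mpr ⟨{w : ↥W | g w t = t}, ht, fun w => Iff.rfl⟩
  exact (Set.finite_iUnion main).subset hsub
end
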